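/- With K the free Z-module on words in {\bullet,\circ} and res as defined (split between letters plus split by deleting one letter), the map res is coassociative: (res \otimes id) \circ res = (id \otimes res) \circ res. -/

import Mathlib

/-- A weight: a word in the two-letter alphabet `{•, ∘}` (encoded as `Bool`,
with `true = •` and `false = ∘`). -/
abbrev Word : Type := List Bool

/-- The Grothendieck group `K`: the free `ℤ`-module on the set of weights,
with basis `a_λ = Finsupp.single λ 1`. -/
abbrev K : Type := Word →₀ ℤ

/-- The model of `K ⊗ K`: the free `ℤ`-module on pairs of weights, with
`a_λ ⊗ a_μ = Finsupp.single (λ, μ) 1`. -/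
abbrev K2 : Type := Word × Word →₀ ℤ

/-- `res` on a basis element: `res(a_λ) = ∑_{i=0}^n a_{λ[1,i]} ⊗ a_{λ(i,n]}
+ ∑_{i=1}^n a_{λ[1,i)} ⊗ a_{λ(i,n]}` where `n = ℓ(λ)`. -/
noncomputable def resWord (w : Word) : K2 :=
  (∑ i ∈ Finset.range (w.length + 1), Finsupp.single (w.take i, w.drop i) 1)
    + ∑ i ∈ Finset.range w.length, Finsupp.single (w.take i, w.drop (i + 1)) 1

/-- The restriction comultiplication `res : K → K ⊗ K`. -/
noncomputable def res : K →ₗ[ℤ] K2 :=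
  Finsupp.lift K2 ℤ Word resWord

/-- The model of `K ⊗ K ⊗ K`: the free `ℤ`-module on triples of weights. -/
abbrev K3 : Type := Word × Word × Word →₀ ℤ

/-- `res ⊗ id : K ⊗ K → K ⊗ K ⊗ K`. -/
noncomputable def resLeft : K2 →ₗ[ℤ] K3 :=
  Finsupp.lift K3 ℤ (Word × Word) fun p =>
    (resWord p.1).sum fun q c => c • Finsupp.single (q.1, q.2, p.2) 1

/-- `id ⊗ res : K ⊗ K → K ⊗ K ⊗ K`. -/
noncomputable def resRight : K2 →ₗ[ℤ] K3 :=
  Finsupp.lift K3 ℤ (Word × Word) fun p =>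
    (resWord p.2).sum fun q c => c • Finsupp.single (p.1, q.1, q.2) 1

open Finset

section Aux

variable {M : Type*} [AddCommMonoid M]

lemma tri (n : ℕ) (f : ℕ → ℕ → M) :
    ∑ j ∈ range (n+1), ∑ i ∈ range (j+1), f i j
      = ∑ i ∈ range (n+1), ∑ k ∈ range (n - i + 1), f i (i + k) := by
  rw [Finset.sum_comm' (t' := range (n+1)) (s' := fun i => Finset.Ico i (n+1))]
  · refine Finset.sum_congr rfl fun i hi => ?_
    rw [Finset.sum_Ico_eq_sum_range]
    simp only [mem_range] at hi
    rw [show n + 1 - i = n - i + 1 by omega]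
  · intro x y
    simp only [mem_range, Finset.mem_Ico]
    omega

lemma tri' (n : ℕ) (f : ℕ → ℕ → M) :
    ∑ j ∈ range (n+1), ∑ i ∈ range j, f i j
      = ∑ i ∈ range n, ∑ k ∈ range (n - i), f i (i + 1 + k) := by
  rw [Finset.sum_comm' (t' := range n) (s' := fun i => Finset.Ico (i+1) (n+1))]
  · refine Finset.sum_congr rfl fun i hi => ?_
    rw [Finset.sum_Ico_eq_sum_range]
    simp only [mem_range] at hi
    rw [show n + 1 - (i+1) = n - i by omega]
  · intro x y
    simp only [mem_range, Finset.mem_Ico]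
    omega

lemma tri2 (n : ℕ) (f : ℕ → ℕ → M) :
    ∑ j ∈ range n, ∑ i ∈ range (j+1), f i j
      = ∑ i ∈ range n, ∑ k ∈ range (n - i), f i (i + k) := by
  rw [Finset.sum_comm' (t' := range n) (s' := fun i => Finset.Ico i n)]
  · refine Finset.sum_congr rfl fun i hi => ?_
    rw [Finset.sum_Ico_eq_sum_range]
  · intro x y
    simp only [mem_range, Finset.mem_Ico]
    omega

lemma tri2' (n : ℕ) (f : ℕ → ℕ → M) :
    ∑ j ∈ range n, ∑ i ∈ range j, f i j
      = ∑ i ∈ range n, ∑ k ∈ range (n - i - 1), f i (i + 1 + k) := by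
  rw [Finset.sum_comm' (t' := range n) (s' := fun i => Finset.Ico (i+1) n)]
  · refine Finset.sum_congr rfl fun i hi => ?_
    rw [Finset.sum_Ico_eq_sum_range]
    rw [show n - (i+1) = n - i - 1 by omega]
  · intro x y
    simp only [mem_range, Finset.mem_Ico]
    omega

end Aux

lemma resLeft_single (p : Word × Word) :
    resLeft (Finsupp.single p 1) =
      (∑ i ∈ Finset.range (p.1.length + 1),
          Finsupp.single (p.1.take i, p.1.drop i, p.2) 1)
        + ∑ i ∈ Finset.range p.1.length,
          Finsupp.single (p.1.take i, p.1.drop (i+1), p.2) 1 := by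
  have h : resLeft (Finsupp.single p 1)
      = Finsupp.lift K3 ℤ (Word × Word)
          (fun q => Finsupp.single (q.1, q.2, p.2) 1) (resWord p.1) := by
    rw [resLeft]
    simp [Finsupp.lift_apply, Finsupp.sum_single_index]
  rw [h, resWord, map_add, map_sum, map_sum]
  simp [Finsupp.lift_apply, Finsupp.sum_single_index]

lemma resRight_single (p : Word × Word) :
    resRight (Finsupp.single p 1) =
      (∑ i ∈ Finset.range (p.2.length + 1),
          Finsupp.single (p.1, p.2.take i, p.2.drop i) 1)
        + ∑ i ∈ Finset.range p.2.length,
          Finsupp.single (p.1, p.2.take i, p.2.drop (i+1)) 1 := by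
  have h : resRight (Finsupp.single p 1)
      = Finsupp.lift K3 ℤ (Word × Word)
          (fun q => Finsupp.single (p.1, q.1, q.2) 1) (resWord p.2) := by
    rw [resRight]
    simp [Finsupp.lift_apply, Finsupp.sum_single_index]
  rw [h, resWord, map_add, map_sum, map_sum]
  simp [Finsupp.lift_apply, Finsupp.sum_single_index]

lemma key (w : Word) : resLeft (resWord w) = resRight (resWord w) := by
  set n := w.length with hn
  -- canonical double sums
  set C1 : K3 := ∑ i ∈ range (n+1), ∑ k ∈ range (n - i + 1),
      Finsupp.single (w.take i, (w.drop i).take k, w.drop (i+k)) 1 with hC1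
  set C2 : K3 := ∑ i ∈ range n, ∑ k ∈ range (n - i),
      Finsupp.single (w.take i, (w.drop i).take k, w.drop (i+k+1)) 1 with hC2
  set C3 : K3 := ∑ i ∈ range n, ∑ k ∈ range (n - i),
      Finsupp.single (w.take i, (w.drop (i+1)).take k, w.drop (i+1+k)) 1 with hC3
  set C4 : K3 := ∑ i ∈ range n, ∑ k ∈ range (n - i - 1),
      Finsupp.single (w.take i, (w.drop (i+1)).take k, w.drop (i+1+k+1)) 1 with hC4
  have hL : resLeft (resWord w) = (C1 + C3) + (C2 + C4) := by
    rw [resWord, map_add, map_sum, map_sum]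
    have h1 : ∑ j ∈ range (n+1), resLeft (Finsupp.single (w.take j, w.drop j) 1)
        = C1 + C3 := by
      have step : ∀ j ∈ range (n+1),
          resLeft (Finsupp.single (w.take j, w.drop j) 1)
            = (∑ i ∈ range (j+1),
                Finsupp.single (w.take i, (w.drop i).take (j - i), w.drop j) 1)
              + ∑ i ∈ range j,
                Finsupp.single (w.take i, (w.drop (i+1)).take (j - (i+1)), w.drop j) 1 := by
        intro j hj
        simp only [mem_range] at hj
        have hjn : j ≤ n := by omega
        rw [resLeft_single]
        have hlen : (w.take j).length = j := by
          simp [hn.symm ▸ hjn]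
        rw [hlen]
        congr 1
        · refine Finset.sum_congr rfl fun i hi => ?_
          simp only [mem_range] at hi
          rw [List.take_take, min_eq_left (by omega), List.drop_take]
        · refine Finset.sum_congr rfl fun i hi => ?_
          simp only [mem_range] at hi
          rw [List.take_take, min_eq_left (by omega), List.drop_take]
      rw [Finset.sum_congr rfl step, Finset.sum_add_distrib]
      congr 1
      · rw [tri n (fun i j => Finsupp.single (w.take i, (w.drop i).take (j - i), w.drop j) 1)]
        refine Finset.sum_congr rfl fun i _ => Finset.sum_congr rfl fun k _ => ?_
        rw [show i + k - i = k by omega]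
      · rw [tri' n (fun i j =>
            Finsupp.single (w.take i, (w.drop (i+1)).take (j - (i+1)), w.drop j) 1)]
        refine Finset.sum_congr rfl fun i _ => Finset.sum_congr rfl fun k _ => ?_
        rw [show i + 1 + k - (i+1) = k by omega]
    have h2 : ∑ j ∈ range n, resLeft (Finsupp.single (w.take j, w.drop (j+1)) 1)
        = C2 + C4 := by
      have step : ∀ j ∈ range n,
          resLeft (Finsupp.single (w.take j, w.drop (j+1)) 1)
            = (∑ i ∈ range (j+1),
                Finsupp.single (w.take i, (w.drop i).take (j - i), w.drop (j+1)) 1)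
              + ∑ i ∈ range j,
                Finsupp.single (w.take i, (w.drop (i+1)).take (j - (i+1)), w.drop (j+1)) 1 := by
        intro j hj
        simp only [mem_range] at hj
        have hjn : j ≤ n := by omega
        rw [resLeft_single]
        have hlen : (w.take j).length = j := by
          simp [hn.symm ▸ hjn]
        rw [hlen]
        congr 1
        · refine Finset.sum_congr rfl fun i hi => ?_
          simp only [mem_range] at hi
          rw [List.take_take, min_eq_left (by omega), List.drop_take]
        · refine Finset.sum_congr rfl fun i hi => ?_
          simp only [mem_range] at hi
          rw [List.take_take, min_eq_left (by omega), List.drop_take]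
      rw [Finset.sum_congr rfl step, Finset.sum_add_distrib]
      congr 1
      · rw [tri2 n (fun i j =>
            Finsupp.single (w.take i, (w.drop i).take (j - i), w.drop (j+1)) 1)]
        refine Finset.sum_congr rfl fun i _ => Finset.sum_congr rfl fun k _ => ?_
        rw [show i + k - i = k by omega]
      · rw [tri2' n (fun i j =>
            Finsupp.single (w.take i, (w.drop (i+1)).take (j - (i+1)), w.drop (j+1)) 1)]
        refine Finset.sum_congr rfl fun i _ => Finset.sum_congr rfl fun k _ => ?_
        rw [show i + 1 + k - (i+1) = k by omega]
    rw [h1, h2]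
  have hR : resRight (resWord w) = (C1 + C2) + (C3 + C4) := by
    rw [resWord, map_add, map_sum, map_sum]
    have h1 : ∑ i ∈ range (n+1), resRight (Finsupp.single (w.take i, w.drop i) 1)
        = C1 + C2 := by
      have step : ∀ i ∈ range (n+1),
          resRight (Finsupp.single (w.take i, w.drop i) 1)
            = (∑ k ∈ range (n - i + 1),
                Finsupp.single (w.take i, (w.drop i).take k, w.drop (i+k)) 1)
              + ∑ k ∈ range (n - i),
                Finsupp.single (w.take i, (w.drop i).take k, w.drop (i+k+1)) 1 := by
        intro i hi
        simp only [mem_range] at hi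
        rw [resRight_single]
        have hlen : (w.drop i).length = n - i := by simp [hn]
        rw [hlen]
        congr 1
        · refine Finset.sum_congr rfl fun k _ => ?_
          rw [List.drop_drop]
        · refine Finset.sum_congr rfl fun k _ => ?_
          rw [List.drop_drop, show i + (k + 1) = i + k + 1 by omega]
      rw [Finset.sum_congr rfl step, Finset.sum_add_distrib]
      congr 1
      rw [Finset.sum_range_succ, Nat.sub_self]
      simp
      exact hC2.symm
    have h2 : ∑ i ∈ range n, resRight (Finsupp.single (w.take i, w.drop (i+1)) 1)
        = C3 + C4 := by
      have step : ∀ i ∈ range n,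
          resRight (Finsupp.single (w.take i, w.drop (i+1)) 1)
            = (∑ k ∈ range (n - i),
                Finsupp.single (w.take i, (w.drop (i+1)).take k, w.drop (i+1+k)) 1)
              + ∑ k ∈ range (n - i - 1),
                Finsupp.single (w.take i, (w.drop (i+1)).take k, w.drop (i+1+k+1)) 1 := by
        intro i hi
        simp only [mem_range] at hi
        rw [resRight_single]
        have hlen : (w.drop (i+1)).length = n - i - 1 := by
          simp [hn]; omega
        rw [hlen, show n - i - 1 + 1 = n - i by omega]
        congr 1
        · refine Finset.sum_congr rfl fun k _ => ?_
          rw [List.drop_drop]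
        · refine Finset.sum_congr rfl fun k _ => ?_
          rw [List.drop_drop, show i + 1 + (k + 1) = i + 1 + k + 1 by omega]
      rw [Finset.sum_congr rfl step, Finset.sum_add_distrib]
    rw [h1, h2]
  rw [hL, hR]
  abel

/-- The comultiplication `res` is coassociative:
`(res ⊗ id) ∘ res = (id ⊗ res) ∘ res`. -/
theorem res_coassoc : ∀ x : K, resLeft (res x) = resRight (res x) := by
  intro x
  induction x using Finsupp.induction_linear with
  | zero => simp
  | add f g hf hg => simp [map_add, hf, hg]
  | single w c =>
    have h : res (Finsupp.single w c) = c • resWord w := by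
      rw [res]
      simp [Finsupp.lift_apply, Finsupp.sum_single_index]
    rw [h, map_smul, map_smul, key]
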